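/- Assume CH (2^{ℵ₀} = ℵ₁). For every nonprincipal ultrafilter U on ω there is a nonprincipal ultrafilter W on ω such that U ordered by containment ⊇ is cofinally equivalent to W ordered by eventual containment ⊇*. Equivalently, under CH every nonprincipal neighborhood filter in βω is cofinally equivalent to a neighborhood filter in βω∖ω. -/

import Mathlib

universe u v w

/-- Two preorders are *cofinally equivalent* if there is a preorder (given here by a
reflexive transitive relation `le` on `R`) such that both are order isomorphic to
cofinal subsets of it. -/
def CofEquiv (P : Type u) (Q : Type v) [Preorder P] [Preorder Q] : Prop :=
  ∃ (R : Type (max u v)) (le : R → R → Prop),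
    Reflexive le ∧ Transitive le ∧
    ∃ (f : P → R) (g : Q → R),
      Function.Injective f ∧ Function.Injective g ∧
      (∀ a b : P, a ≤ b ↔ le (f a) (f b)) ∧
      (∀ a b : Q, a ≤ b ↔ le (g a) (g b)) ∧
      (∀ r : R, ∃ a : P, le r (f a)) ∧
      (∀ r : R, ∃ b : Q, le r (g b))

/-- An ultrafilter on `ω` as a preorder under containment `⊇`. -/
def UOrd (U : Ultrafilter ℕ) := {s : Set ℕ // s ∈ U}

instance (U : Ultrafilter ℕ) : Preorder (UOrd U) where
  le s t := Subtype.val t ⊆ Subtype.val s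
  le_refl _ := subset_rfl
  le_trans _ _ _ h1 h2 := Set.Subset.trans h2 h1

/-- An ultrafilter on `ω` as a preorder under eventual containment `⊇*`
(`A ⊇* B` iff `B \\ A` is finite). -/
def UOrdStar (U : Ultrafilter ℕ) := {s : Set ℕ // s ∈ U}

instance (U : Ultrafilter ℕ) : Preorder (UOrdStar U) where
  le s t := (Subtype.val t \ Subtype.val s).Finite
  le_refl s := by simp
  le_trans s t u h1 h2 := by
    refine (h2.union h1).subset ?_
    intro x hx
    by_cases hxt : x ∈ Subtype.val t
    · exact Or.inr ⟨hxt, hx.2⟩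
    · exact Or.inl ⟨hx.1, hxt⟩


namespace Chbeta
open Cardinal Set


/-- `asub s t` : `s ⊆* t`, i.e. `s \ t` is finite. -/
def asub (s t : Set ℕ) : Prop := (s \ t).Finite

lemma asub_refl (s : Set ℕ) : asub s s := by simp [asub]

lemma asub_of_subset {s t : Set ℕ} (h : s ⊆ t) : asub s t := by
  have : s \ t = ∅ := Set.diff_eq_empty.2 h
  simp [asub, this]

lemma asub_trans {s t u : Set ℕ} (h1 : asub s t) (h2 : asub t u) : asub s u := by
  refine (h1.union h2).subset ?_
  intro x hx
  by_cases hxt : x ∈ t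
  · exact Or.inr ⟨hxt, hx.2⟩
  · exact Or.inl ⟨hx.1, hxt⟩

lemma asub_trans_subset {s t u : Set ℕ} (h1 : asub s t) (h2 : t ⊆ u) : asub s u :=
  asub_trans h1 (asub_of_subset h2)

lemma subset_asub_trans {s t u : Set ℕ} (h1 : s ⊆ t) (h2 : asub t u) : asub s u :=
  asub_trans (asub_of_subset h1) h2

lemma asub_inter_Ici (s : Set ℕ) (c : ℕ) : asub s (s ∩ Set.Ici c) := by
  have : s \ (s ∩ Set.Ici c) ⊆ Set.Iio c := by
    intro x hx
    by_contra h
    exact hx.2 ⟨hx.1, (le_of_not_gt h : c ≤ x)⟩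
  exact (Set.finite_Iio c).subset this

lemma Infinite.asub_infinite {s t : Set ℕ} (hs : s.Infinite) (h : asub s t) : t.Infinite := by
  have : s ⊆ t ∪ (s \ t) := by
    intro x hx
    by_cases hxt : x ∈ t
    · exact Or.inl hxt
    · exact Or.inr ⟨hx, hxt⟩
  by_contra hfin
  rw [Set.not_infinite] at hfin
  exact hs ((hfin.union h).subset this)

/-- pseudo-intersection of a countable almost-chain of infinite sets -/
lemma exists_pseudo_inter {ι : Sort*} [Countable ι] (t : ι → Set ℕ)
    (hinf : ∀ i, (t i).Infinite)
    (hchain : ∀ i j, asub (t i) (t j) ∨ asub (t j) (t i)) :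
    ∃ s : Set ℕ, s.Infinite ∧ ∀ i, asub s (t i) := by
  by_cases hne : Nonempty ι
  · obtain ⟨f, hf⟩ := exists_surjective_nat ι
    -- minimal element among first n+1
    have hmin : ∀ n : ℕ, ∃ i, ∀ k ≤ n, asub (t i) (t (f k)) := by
      intro n
      induction n with
      | zero =>
        exact ⟨f 0, fun k hk => by rw [Nat.le_zero.1 hk]; exact asub_refl _⟩
      | succ n ih =>
        obtain ⟨i, hi⟩ := ih
        rcases hchain i (f (n + 1)) with h | h
        · refine ⟨i, fun k hk => ?_⟩
          rcases Nat.le_succ_iff_eq_or_le.1 hk with rfl | hk'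
          · exact h
          · exact hi k hk'
        · refine ⟨f (n + 1), fun k hk => ?_⟩
          rcases Nat.le_succ_iff_eq_or_le.1 hk with rfl | hk'
          · exact asub_refl _
          · exact asub_trans h (hi k hk')
    have hstep : ∀ n m : ℕ, ∃ z, m < z ∧ ∀ k ≤ n, z ∈ t (f k) := by
      intro n m
      obtain ⟨i, hi⟩ := hmin n
      have hbig : ((t i) \ ⋃ k ∈ Finset.range (n + 1), (t i \ t (f k))).Infinite := by
        refine (hinf i).diff ?_
        refine Set.Finite.biUnion (Finset.range (n + 1)).finite_toSet ?_
        intro k hk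
        exact hi k (Nat.lt_succ_iff.1 (Finset.mem_range.1 hk))
      obtain ⟨z, hz, hzm⟩ := hbig.exists_gt m
      refine ⟨z, hzm, fun k hk => ?_⟩
      by_contra hzk
      exact hz.2 (Set.mem_biUnion (Finset.mem_range.2 (Nat.lt_succ_iff.2 hk)) ⟨hz.1, hzk⟩)
    choose Z hZ1 hZ2 using hstep
    let g : ℕ → ℕ := fun n => Nat.rec (Z 0 0) (fun n zn => Z (n + 1) zn) n
    have hg0 : g 0 = Z 0 0 := rfl
    have hgs : ∀ n, g (n + 1) = Z (n + 1) (g n) := fun n => rfl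
    have hgmono : StrictMono g := by
      apply strictMono_nat_of_lt_succ
      intro n
      rw [hgs n]
      exact hZ1 (n + 1) (g n)
    have hgmem : ∀ n k, k ≤ n → g n ∈ t (f k) := by
      intro n
      cases n with
      | zero => intro k hk; rw [hg0]; exact hZ2 0 0 k hk
      | succ n => intro k hk; rw [hgs n]; exact hZ2 (n + 1) (g n) k hk
    refine ⟨Set.range g, Set.infinite_range_of_injective hgmono.injective, ?_⟩
    intro i
    obtain ⟨k, rfl⟩ := hf i
    have hsub : Set.range g \ t (f k) ⊆ g '' (Set.Iio k) := by
      rintro x ⟨⟨n, rfl⟩, hx⟩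
      refine ⟨n, ?_, rfl⟩
      by_contra h
      exact hx (hgmem n k (le_of_not_gt h))
    exact ((Set.finite_Iio k).image g).subset hsub
  · exact ⟨Set.univ, Set.infinite_univ, fun i => absurd ⟨i⟩ hne⟩

/-- two disjoint transversals of a countable family of infinite sets -/
lemma exists_two_transversals (𝒜 : Set (Set ℕ)) (hc : 𝒜.Countable)
    (hinf : ∀ A ∈ 𝒜, A.Infinite) :
    ∃ Ta Tb : Set ℕ, Disjoint Ta Tb ∧ ∀ A ∈ 𝒜, (A ∩ Ta).Nonempty ∧ (A ∩ Tb).Nonempty := by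
  rcases Set.eq_empty_or_nonempty 𝒜 with rfl | hne
  · exact ⟨∅, ∅, disjoint_bot_right, fun A hA => absurd hA (Set.notMem_empty A)⟩
  · have : Countable 𝒜 := hc.to_subtype
    have : Nonempty 𝒜 := hne.to_subtype
    obtain ⟨f, hf⟩ := exists_surjective_nat 𝒜
    -- choose interleaved points
    have hstep : ∀ (n : ℕ) (m : ℕ), ∃ p : ℕ × ℕ, m < p.1 ∧ p.1 < p.2 ∧
        p.1 ∈ (f n : Set ℕ) ∧ p.2 ∈ (f n : Set ℕ) := by
      intro n m
      obtain ⟨a, ha, ham⟩ := (hinf _ (f n).2).exists_gt m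
      obtain ⟨b, hb, hab⟩ := (hinf _ (f n).2).exists_gt a
      exact ⟨(a, b), ham, hab, ha, hb⟩
    choose P h1 h2 h3 h4 using hstep
    let p : ℕ → ℕ × ℕ := fun n => Nat.rec (P 0 0) (fun n pn => P (n + 1) pn.2) n
    have hp0 : p 0 = P 0 0 := rfl
    have hps : ∀ n, p (n + 1) = P (n + 1) (p n).2 := fun n => rfl
    have hmem1 : ∀ n, (p n).1 ∈ (f n : Set ℕ) := by
      intro n; cases n with
      | zero => exact h3 0 0
      | succ n => exact h3 (n + 1) (p n).2
    have hmem2 : ∀ n, (p n).2 ∈ (f n : Set ℕ) := by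
      intro n; cases n with
      | zero => exact h4 0 0
      | succ n => exact h4 (n + 1) (p n).2
    have hlt : ∀ n, (p n).1 < (p n).2 := by
      intro n; cases n with
      | zero => exact h2 0 0
      | succ n => exact h2 (n + 1) (p n).2
    have hlt2 : ∀ n, (p n).2 < (p (n + 1)).1 := by
      intro n; rw [hps n]; exact h1 (n + 1) (p n).2
    -- interleaved strictly monotone sequence
    let c : ℕ → ℕ := fun k => if k % 2 = 0 then (p (k / 2)).1 else (p (k / 2)).2
    have hc : StrictMono c := by
      apply strictMono_nat_of_lt_succ
      intro k
      rcases Nat.even_or_odd k with ⟨j, hj⟩ | ⟨j, hj⟩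
      · have e1 : k % 2 = 0 := by omega
        have e2 : (k + 1) % 2 = 1 := by omega
        have e3 : k / 2 = j := by omega
        have e4 : (k + 1) / 2 = j := by omega
        simp only [c, e1, e2, e3, e4]
        norm_num
        exact hlt j
      · have e1 : k % 2 = 1 := by omega
        have e2 : (k + 1) % 2 = 0 := by omega
        have e3 : k / 2 = j := by omega
        have e4 : (k + 1) / 2 = j + 1 := by omega
        simp only [c, e1, e2, e3, e4]
        norm_num
        exact hlt2 j
    refine ⟨Set.range (fun n => (p n).1), Set.range (fun n => (p n).2), ?_, ?_⟩
    · rw [Set.disjoint_left]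
      rintro x ⟨n, rfl⟩ ⟨m, hm⟩
      have hx1 : (p n).1 = c (2 * n) := by
        simp only [c]
        have : (2 * n) % 2 = 0 := by omega
        have h2 : 2 * n / 2 = n := by omega
        simp [this, h2]
      have hx2 : (p m).2 = c (2 * m + 1) := by
        simp only [c]
        have : (2 * m + 1) % 2 = 1 := by omega
        have h2 : (2 * m + 1) / 2 = m := by omega
        simp [this, h2]
      have hm' : (p m).2 = (p n).1 := hm
      have : c (2 * m + 1) = c (2 * n) := by rw [← hx1, ← hx2, hm']
      have := hc.injective this
      omega
    · intro A hA
      obtain ⟨n, hn⟩ := hf ⟨A, hA⟩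
      have hval : (f n : Set ℕ) = A := congrArg Subtype.val hn
      constructor
      · exact ⟨(p n).1, by rw [← hval]; exact hmem1 n, ⟨n, rfl⟩⟩
      · exact ⟨(p n).2, by rw [← hval]; exact hmem2 n, ⟨n, rfl⟩⟩



/-- All the data extracted from CH that the construction needs. -/
structure Ctx where
  U : Ultrafilter ℕ
  hU : ∀ s : Set ℕ, sᶜ.Finite → s ∈ U
  lt : Set ℕ → Set ℕ → Prop
  hwf : WellFounded lt
  htrans : ∀ x y z, lt x y → lt y z → lt x z
  htri : ∀ x y, lt x y ∨ x = y ∨ lt y x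
  hirr : ∀ x, ¬ lt x x
  hcnt : ∀ x, {y | lt y x}.Countable
  hbddS : ∀ S C : Set (Set ℕ), ¬ S.Countable → C.Countable → ∃ x ∈ S, ∀ c ∈ C, lt c x
  g : Set ℕ → Set (ℕ × ℕ)
  hg : ∀ X : Set (ℕ × ℕ), ¬ {x | g x = X}.Countable

lemma uncountable_setNat : ¬ (Set.univ : Set (Set ℕ)).Countable := by
  intro h
  rw [Set.countable_univ_iff] at h
  have h1 : #(Set ℕ) ≤ ℵ₀ := Cardinal.mk_le_aleph0_iff.2 h
  have h2 : ℵ₀ < #(Set ℕ) := by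
    rw [Cardinal.mk_set, Cardinal.mk_nat]
    exact Cardinal.cantor _
  exact absurd h1 (not_le.2 h2)

lemma exists_good_order (hCH : (2 : Cardinal.{0}) ^ Cardinal.aleph0 = Cardinal.aleph 1) :
    ∃ lt : Set ℕ → Set ℕ → Prop,
      WellFounded lt ∧
      (∀ x y z, lt x y → lt y z → lt x z) ∧
      (∀ x y, lt x y ∨ x = y ∨ lt y x) ∧
      (∀ x, ¬ lt x x) ∧
      (∀ x, {y | lt y x}.Countable) ∧
      (∀ S C : Set (Set ℕ), ¬ S.Countable → C.Countable → ∃ x ∈ S, ∀ c ∈ C, lt c x) := by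
  have h1 : #(Set ℕ) = Cardinal.aleph 1 := by
    rw [Cardinal.mk_set, Cardinal.mk_nat]; exact hCH
  have h2 : #((Cardinal.aleph 1).ord.ToType) = Cardinal.aleph 1 :=
    Cardinal.mk_ord_toType _
  obtain ⟨e⟩ := Cardinal.eq.1 (h1.trans h2.symm)
  have hcnt : ∀ x : Set ℕ, {y | e y < e x}.Countable := by
    intro x
    rw [Cardinal.countable_iff_lt_aleph_one]
    calc #{y | e y < e x} ≤ #(Set.Iio (e x)) := by
          refine Cardinal.mk_le_of_injective
            (f := fun y : {y | e y < e x} => (⟨e y.1, y.2⟩ : Set.Iio (e x))) ?_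
          intro a b hab
          exact Subtype.ext (e.injective (congrArg Subtype.val hab))
      _ < Cardinal.aleph 1 := Cardinal.mk_Iio_ord_toType _
  refine ⟨fun x y => e x < e y, ?_, ?_, ?_, ?_, hcnt, ?_⟩
  · exact InvImage.wf e (IsWellFounded.wf (r := ((· < ·) : _ → _ → Prop)))
  · intro x y z h1 h2; exact lt_trans h1 h2
  · intro x y
    rcases lt_trichotomy (e x) (e y) with h | h | h
    · exact Or.inl h
    · exact Or.inr (Or.inl (e.injective h))
    · exact Or.inr (Or.inr h)
  · intro x; exact lt_irrefl _
  · intro S C hS hC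
    have hD : (C ∪ ⋃ c ∈ C, {y | e y < e c}).Countable :=
      hC.union (hC.biUnion fun c _ => hcnt c)
    have hns : ¬ S ⊆ (C ∪ ⋃ c ∈ C, {y | e y < e c}) := by
      intro h
      exact hS (hD.mono h)
    obtain ⟨z, hzS, hz⟩ := Set.not_subset.1 hns
    refine ⟨z, hzS, fun c hc => ?_⟩
    rcases lt_trichotomy (e c) (e z) with h | h | h
    · exact h
    · exact absurd (Set.mem_union_left _ (e.injective h ▸ hc)) hz
    · exact absurd (Set.mem_union_right _ (Set.mem_biUnion hc h)) hz

/-- Build the context from CH and the ultrafilter. -/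
lemma exists_ctx (hCH : (2 : Cardinal.{0}) ^ Cardinal.aleph0 = Cardinal.aleph 1)
    (U : Ultrafilter ℕ) (hU : ∀ s : Set ℕ, sᶜ.Finite → s ∈ U) :
    ∃ c : Ctx, c.U = U := by
  obtain ⟨lt, hwf, htrans, htri, hirr, hcnt, hbddS⟩ := exists_good_order hCH
  -- a bijection `Set ℕ ≃ Set ℕ × Set (ℕ × ℕ)`
  have hcard : #(Set ℕ) = #(Set ℕ × Set (ℕ × ℕ)) := by
    have hp : #(ℕ × ℕ) = ℵ₀ := Cardinal.mk_eq_aleph0 _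
    rw [Cardinal.mk_prod, Cardinal.lift_id, Cardinal.lift_id, Cardinal.mk_set, Cardinal.mk_set,
      Cardinal.mk_nat, hp, ← Cardinal.power_add, Cardinal.aleph0_add_aleph0]
  obtain ⟨b⟩ := Cardinal.eq.1 hcard
  refine ⟨⟨U, hU, lt, hwf, htrans, htri, hirr, hcnt, hbddS, fun x => (b x).2, ?_⟩, rfl⟩
  intro X h
  have hinj : Function.Injective (fun y : Set ℕ => b.symm (y, X)) := by
    intro y1 y2 h12
    have := congrArg b h12
    simp only [Equiv.apply_symm_apply] at this
    exact (Prod.mk.injEq .. ▸ this).1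
  have hrange : Set.range (fun y : Set ℕ => b.symm (y, X)) ⊆ {x | (b x).2 = X} := by
    rintro _ ⟨y, rfl⟩
    simp
  have hcr : (Set.range fun y : Set ℕ => b.symm (y, X)).Countable := h.mono hrange
  have : Countable (Set ℕ) := by
    have := hcr.to_subtype
    exact Function.Injective.countable (f := fun y : Set ℕ =>
      (⟨b.symm (y, X), ⟨y, rfl⟩⟩ : Set.range fun y : Set ℕ => b.symm (y, X)))
      (fun y1 y2 h12 => hinj (congrArg Subtype.val h12))
  exact uncountable_setNat (Set.countable_univ_iff.2 this)

namespace Ctx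

open scoped Classical

variable (c : Ctx)

lemma mem_U_infinite {A : Set ℕ} (hA : A ∈ c.U) : A.Infinite := by
  by_contra hfin
  rw [Set.not_infinite] at hfin
  have h1 : Aᶜ ∈ c.U := c.hU Aᶜ (by rwa [compl_compl])
  have h2 : A ∩ Aᶜ ∈ c.U := Filter.inter_mem hA h1
  rw [Set.inter_compl_self] at h2
  exact Ultrafilter.empty_notMem h2

/-- column of a planar set -/
def col (X : Set (ℕ × ℕ)) (m : ℕ) : Set ℕ := {n | (m, n) ∈ X}

/-- next element of `A` above `m` -/
noncomputable def nxt (A : Set ℕ) (m : ℕ) : ℕ := sInf {a | a ∈ A ∧ m < a}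

lemma nxt_spec {A : Set ℕ} (hA : A.Infinite) (m : ℕ) : nxt A m ∈ A ∧ m < nxt A m := by
  have hne : {a | a ∈ A ∧ m < a}.Nonempty := by
    obtain ⟨b, hb, hbm⟩ := hA.exists_gt m
    exact ⟨b, hb, hbm⟩
  exact Nat.sInf_mem hne

lemma nxt_mono {A A' : Set ℕ} (h : A' ⊆ A) (hA' : A'.Infinite) (m : ℕ) :
    nxt A m ≤ nxt A' m := by
  have h1 := nxt_spec hA' m
  exact Nat.sInf_le ⟨h h1.1, h1.2⟩

/-- the set of good columns of the task at stage `x`, relative to a stage assignment `t` -/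
def Pset (x : Set ℕ) (t : Set ℕ → Set ℕ) : Set ℕ :=
  {m | t (col (c.g x) m) ⊆ col (c.g x) m}

def TaskHyp (x : Set ℕ) (t : Set ℕ → Set ℕ) : Prop :=
  (∀ m, c.lt (col (c.g x) m) x) ∧ c.Pset x t ∈ c.U

def TaskOut (x : Set ℕ) (t : Set ℕ → Set ℕ) (s : Set ℕ) : Prop :=
  ∃ A, A ∈ c.U ∧ A ⊆ c.Pset x t ∧
    ∀ m ∈ A, ∀ n ∈ s, nxt A m ≤ n → n ∈ col (c.g x) m

def Good (x : Set ℕ) (t : Set ℕ → Set ℕ) (s : Set ℕ) : Prop :=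
  s.Infinite ∧ (∀ y, c.lt y x → asub s (t y)) ∧ (s ⊆ x ∨ s ⊆ xᶜ) ∧
    (c.TaskHyp x t → c.TaskOut x t s)

lemma good_congr {x : Set ℕ} {t t' : Set ℕ → Set ℕ} {s : Set ℕ}
    (h : ∀ y, c.lt y x → t y = t' y) (hg : c.Good x t s) : c.Good x t' s := by
  obtain ⟨h1, h2, h3, h4⟩ := hg
  refine ⟨h1, fun y hy => h y hy ▸ h2 y hy, h3, ?_⟩
  intro hth'
  have hPeq : c.Pset x t = c.Pset x t' := by
    ext m
    simp only [Pset, Set.mem_setOf_eq, h _ (hth'.1 m)]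
  have hth : c.TaskHyp x t := ⟨hth'.1, hPeq ▸ hth'.2⟩
  obtain ⟨A, hA1, hA2, hA3⟩ := h4 hth
  exact ⟨A, hA1, hPeq ▸ hA2, hA3⟩

lemma exists_good (x : Set ℕ) (t : Set ℕ → Set ℕ)
    (ht_inf : ∀ y, c.lt y x → (t y).Infinite)
    (ht_chain : ∀ y z, c.lt y x → c.lt z x → c.lt y z → asub (t z) (t y)) :
    ∃ s, c.Good x t s := by
  -- pseudo-intersection of the previous stages
  have : Countable {y // c.lt y x} := (c.hcnt x).to_subtype
  obtain ⟨s0, hs0inf, hs0⟩ := exists_pseudo_inter (fun i : {y // c.lt y x} => t i.1)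
    (fun i => ht_inf i.1 i.2)
    (by
      intro i j
      rcases c.htri i.1 j.1 with h | h | h
      · exact Or.inr (ht_chain i.1 j.1 i.2 j.2 h)
      · refine Or.inl ?_
        show asub (t i.1) (t j.1)
        rw [h]
        exact asub_refl _
      · exact Or.inl (ht_chain j.1 i.1 j.2 i.2 h))
  -- decision step
  obtain ⟨s1, hs1inf, hs1sub, hs1dec⟩ :
      ∃ s1 : Set ℕ, s1.Infinite ∧ s1 ⊆ s0 ∧ (s1 ⊆ x ∨ s1 ⊆ xᶜ) := by
    by_cases hdx : (s0 ∩ x).Infinite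
    · exact ⟨s0 ∩ x, hdx, Set.inter_subset_left, Or.inl Set.inter_subset_right⟩
    · refine ⟨s0 \ x, ?_, Set.diff_subset, Or.inr (Set.diff_subset_compl _ _)⟩
      rw [Set.not_infinite] at hdx
      by_contra hfin
      rw [Set.not_infinite] at hfin
      refine hs0inf ((hdx.union hfin).subset ?_)
      intro a ha
      by_cases hax : a ∈ x
      · exact Or.inl ⟨ha, hax⟩
      · exact Or.inr ⟨ha, hax⟩
  have hs1chain : ∀ y, c.lt y x → asub s1 (t y) :=
    fun y hy => subset_asub_trans hs1sub (hs0 ⟨y, hy⟩)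
  by_cases hth : c.TaskHyp x t
  swap
  · exact ⟨s1, hs1inf, hs1chain, hs1dec, fun h => absurd h hth⟩
  -- the task
  obtain ⟨hcols, hPU⟩ := hth
  -- bound function K
  have hK : ∀ m, ∃ k, m ∈ c.Pset x t → ∀ n ∈ s1, k ≤ n → n ∈ col (c.g x) m := by
    intro m
    by_cases hm : m ∈ c.Pset x t
    · have hfin : (s1 \ col (c.g x) m).Finite :=
        asub_trans_subset (subset_asub_trans hs1sub (hs0 ⟨_, hcols m⟩)) hm
      obtain ⟨B, hB⟩ := hfin.bddAbove
      refine ⟨B + 1, fun _ n hn hBn => ?_⟩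
      by_contra hnc
      have := hB (⟨hn, hnc⟩ : n ∈ s1 \ col (c.g x) m)
      omega
    · exact ⟨0, fun h => absurd h hm⟩
  choose K hKs using hK
  -- interval construction
  have hstep : ∀ aj : ℕ, ∃ v, aj < v ∧ (∃ b ∈ s1, aj < b ∧ b < v) ∧ ∀ m < aj, K m < v := by
    intro aj
    obtain ⟨b, hb, hbj⟩ := hs1inf.exists_gt aj
    refine ⟨max (aj + 1) (max (b + 1) (1 + (Finset.range aj).sup K)), by omega, ⟨b, hb, hbj, by omega⟩, ?_⟩
    intro m hm
    have : K m ≤ (Finset.range aj).sup K := Finset.le_sup (Finset.mem_range.2 hm)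
    omega
  choose F hF1 hF2 hF3 using hstep
  set a : ℕ → ℕ := fun k => Nat.rec 0 (fun _ ak => F ak) k with ha
  have ha0 : a 0 = 0 := rfl
  have has : ∀ k, a (k + 1) = F (a k) := fun k => rfl
  have hamono : StrictMono a := by
    apply strictMono_nat_of_lt_succ
    intro k
    rw [has k]
    exact hF1 (a k)
  have haK : ∀ k m, m < a k → K m < a (k + 1) := by
    intro k m hm
    rw [has k]
    exact hF3 (a k) m hm
  have haS : ∀ k, ∃ b ∈ s1, a k < b ∧ b < a (k + 1) := by
    intro k
    rw [has k]
    exact hF2 (a k)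
  have hak : ∀ k, k ≤ a k := by
    intro k
    induction k with
    | zero => omega
    | succ k ih =>
      have h2 : a k < a (k + 1) := hamono (lt_add_one k)
      omega
  -- block function
  set blk : ℕ → ℕ := fun n => Nat.findGreatest (fun k => a k ≤ n) n with hblk
  have hblk_le : ∀ n, a (blk n) ≤ n := by
    intro n
    exact Nat.findGreatest_spec (P := fun k => a k ≤ n) (m := 0) (Nat.zero_le n)
      (show a 0 ≤ n from Nat.zero_le n)
  have hblk_lt : ∀ n, n < a (blk n + 1) := by
    intro n
    by_cases h : blk n + 1 ≤ n
    · by_contra hc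
      exact Nat.findGreatest_is_greatest (Nat.lt_succ_self _) h (le_of_not_gt hc)
    · have := hak (blk n + 1)
      omega
  have hblk_mono : ∀ {m n}, m ≤ n → blk m ≤ blk n := by
    intro m n hmn
    exact Nat.le_findGreatest (le_trans (Nat.findGreatest_le m) hmn) (le_trans (hblk_le m) hmn)
  have hblk_eq : ∀ k b, a k ≤ b → b < a (k + 1) → blk b = k := by
    intro k b h1 h2
    have hge : k ≤ blk b := Nat.le_findGreatest (le_trans (hak k) h1) h1
    have hle : blk b ≤ k := by
      by_contra hc
      have h5 : k + 1 ≤ blk b := by omega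
      have h6 : a (k + 1) ≤ a (blk b) := hamono.monotone h5
      have := hblk_le b
      omega
    omega
  -- choose the residue class
  obtain ⟨e, he3, heU⟩ : ∃ e, e < 3 ∧ {n | blk n % 3 = e} ∈ c.U := by
    by_cases h0 : {n | blk n % 3 = 0} ∈ c.U
    · exact ⟨0, by omega, h0⟩
    by_cases h1 : {n | blk n % 3 = 1} ∈ c.U
    · exact ⟨1, by omega, h1⟩
    refine ⟨2, by omega, ?_⟩
    have hc0 : {n | blk n % 3 = 0}ᶜ ∈ c.U := (Ultrafilter.compl_mem_iff_notMem).2 h0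
    have hc1 : {n | blk n % 3 = 1}ᶜ ∈ c.U := (Ultrafilter.compl_mem_iff_notMem).2 h1
    refine c.U.toFilter.mem_of_superset (Filter.inter_mem hc0 hc1) ?_
    intro n hn
    simp only [Set.mem_inter_iff, Set.mem_compl_iff, Set.mem_setOf_eq] at hn ⊢
    omega
  set A0 : Set ℕ := c.Pset x t ∩ {n | blk n % 3 = e} with hA0
  have hA0U : A0 ∈ c.U := Filter.inter_mem hPU heU
  have hA0inf : A0.Infinite := c.mem_U_infinite hA0U
  -- the new stage set
  set s : Set ℕ := {n | n ∈ s1 ∧ blk n % 3 = (e + 2) % 3} with hs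
  choose bfun hb1 hb2 hb3 using haS
  have hbblk : ∀ k, blk (bfun k) = k := fun k => hblk_eq k (bfun k) (le_of_lt (hb2 k)) (hb3 k)
  have hsinf : s.Infinite := by
    have hKinf : {k : ℕ | k % 3 = (e + 2) % 3}.Infinite := by
      apply Set.infinite_of_not_bddAbove
      rintro ⟨B, hB⟩
      have : 3 * B + 3 + (e + 2) % 3 ∈ {k : ℕ | k % 3 = (e + 2) % 3} := by
        simp only [Set.mem_setOf_eq]
        omega
      have := hB this
      omega
    refine Set.Infinite.mono ?_ (hKinf.image (Set.injOn_of_injective (f := bfun) ?_))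
    · rintro _ ⟨k, hk, rfl⟩
      exact ⟨hb1 k, by rw [hbblk k]; exact hk⟩
    · intro k1 k2 h12
      have := congrArg blk h12
      rwa [hbblk, hbblk] at this
  refine ⟨s, hsinf, ?_, ?_, ?_⟩
  · intro y hy
    exact subset_asub_trans (fun n hn => hn.1) (hs1chain y hy)
  · rcases hs1dec with h | h
    · exact Or.inl (fun n hn => h hn.1)
    · exact Or.inr (fun n hn => h hn.1)
  · intro _
    refine ⟨A0, hA0U, Set.inter_subset_left, ?_⟩
    intro m hm n hn hnxt
    have hm' := nxt_spec hA0inf m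
    set m' := nxt A0 m with hm'def
    have hm'A0 : m' ∈ A0 := hm'.1
    have hmm' : m < m' := hm'.2
    have hm'n : m' ≤ n := hnxt
    have h1 : blk m' % 3 = e := hm'A0.2
    have h2 : blk n % 3 = (e + 2) % 3 := hn.2
    have h3 : blk m' ≤ blk n := hblk_mono hm'n
    have hblks : blk m' + 2 ≤ blk n := by omega
    have h4 : m' < a (blk m' + 1) := hblk_lt m'
    have h5' : blk m' + 1 ≤ blk n - 1 := by omega
    have h5 : a (blk m' + 1) ≤ a (blk n - 1) := hamono.monotone h5'
    have h6 : m < a (blk n - 1) := by omega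
    have h7 : K m < a (blk n - 1 + 1) := haK _ m h6
    have h8 : blk n - 1 + 1 = blk n := by omega
    have h9 : a (blk n) ≤ n := hblk_le n
    rw [h8] at h7
    exact hKs m hm.1 n hn.1 (by omega)

/-! The transfinite recursion defining the tower `T`. -/

noncomputable def step (x : Set ℕ) (rec : ∀ y, c.lt y x → Set ℕ) : Set ℕ :=
  if h : ∃ s, c.Good x (fun y => if hy : c.lt y x then rec y hy else ∅) s then h.choose else ∅

noncomputable def T : Set ℕ → Set ℕ := c.hwf.fix c.step

lemma T_eq (x : Set ℕ) : c.T x = c.step x (fun y _ => c.T y) := by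
  exact c.hwf.fix_eq c.step x

lemma T_good (x : Set ℕ) : c.Good x c.T (c.T x) := by
  refine c.hwf.induction (C := fun x => c.Good x c.T (c.T x)) x ?_
  intro x IH
  set t' : Set ℕ → Set ℕ :=
    fun y => if hy : c.lt y x then (fun y (_ : c.lt y x) => c.T y) y hy else ∅ with ht'
  have hagree : ∀ y, c.lt y x → t' y = c.T y := fun y hy => dif_pos hy
  have hyp1 : ∀ y, c.lt y x → (t' y).Infinite := by
    intro y hy; rw [hagree y hy]; exact (IH y hy).1
  have hyp2 : ∀ y z, c.lt y x → c.lt z x → c.lt y z → asub (t' z) (t' y) := by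
    intro y z hy hz hyz
    rw [hagree y hy, hagree z hz]
    exact (IH z hz).2.1 y hyz
  have hex : ∃ s, c.Good x t' s := c.exists_good x t' hyp1 hyp2
  have hTx : c.T x = hex.choose := by
    rw [c.T_eq x]
    show c.step x (fun y _ => c.T y) = _
    unfold step
    rw [dif_pos hex]
  have hgood : c.Good x t' (c.T x) := by
    rw [hTx]
    exact hex.choose_spec
  exact c.good_congr hagree hgood

lemma T_inf (x : Set ℕ) : (c.T x).Infinite := (c.T_good x).1

lemma T_chain {y x : Set ℕ} (h : c.lt y x) : asub (c.T x) (c.T y) := (c.T_good x).2.1 y h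

lemma T_dec (x : Set ℕ) : c.T x ⊆ x ∨ c.T x ⊆ xᶜ := (c.T_good x).2.2.1

lemma T_task (x : Set ℕ) (h : c.TaskHyp x c.T) : c.TaskOut x c.T (c.T x) :=
  (c.T_good x).2.2.2 h

lemma T_comparable (x y : Set ℕ) :
    ∃ z, asub (c.T z) (c.T x) ∧ asub (c.T z) (c.T y) := by
  rcases c.htri x y with h | h | h
  · exact ⟨y, c.T_chain h, asub_refl _⟩
  · exact ⟨y, h ▸ asub_refl _, asub_refl _⟩
  · exact ⟨x, asub_refl _, c.T_chain h⟩

/-! The ultrafilter `V` generated by the tower. -/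

def Vfil : Filter ℕ where
  sets := {S | ∃ x, asub (c.T x) S}
  univ_sets := ⟨∅, asub_of_subset (Set.subset_univ _)⟩
  sets_of_superset := by
    rintro S S' ⟨x, hx⟩ hSS'
    exact ⟨x, asub_trans_subset hx hSS'⟩
  inter_sets := by
    rintro S S' ⟨x, hx⟩ ⟨y, hy⟩
    obtain ⟨z, hzx, hzy⟩ := c.T_comparable x y
    refine ⟨z, ?_⟩
    have h1 : asub (c.T z) S := asub_trans hzx hx
    have h2 : asub (c.T z) S' := asub_trans hzy hy
    refine (h1.union h2).subset ?_
    intro a ha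
    by_cases haS : a ∈ S
    · exact Or.inr ⟨ha.1, fun hb => ha.2 ⟨haS, hb⟩⟩
    · exact Or.inl ⟨ha.1, haS⟩

lemma not_asub_T_empty (x : Set ℕ) : ¬ asub (c.T x) ∅ := by
  intro h
  exact c.T_inf x (h.subset (by simp))

noncomputable def V : Ultrafilter ℕ := by
  refine Ultrafilter.ofComplNotMemIff c.Vfil ?_
  intro S
  constructor
  · intro hc
    rcases c.T_dec S with h | h
    · exact ⟨S, asub_of_subset h⟩
    · exact absurd ⟨S, asub_of_subset h⟩ hc
  · rintro ⟨x, hx⟩ ⟨y, hy⟩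
    obtain ⟨z, hzx, hzy⟩ := c.T_comparable x y
    have h1 : asub (c.T z) S := asub_trans hzx hx
    have h2 : asub (c.T z) Sᶜ := asub_trans hzy hy
    refine c.T_inf z ((h1.union h2).subset ?_)
    intro a ha
    by_cases haS : a ∈ S
    · exact Or.inr ⟨ha, fun hb => hb haS⟩
    · exact Or.inl ⟨ha, haS⟩

lemma mem_V_iff (S : Set ℕ) : S ∈ c.V ↔ ∃ x, asub (c.T x) S := Iff.rfl

lemma V_asub {S S' : Set ℕ} (hS : S ∈ c.V) (h : asub S S') : S' ∈ c.V := by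
  obtain ⟨x, hx⟩ := (c.mem_V_iff S).1 hS
  exact (c.mem_V_iff S').2 ⟨x, asub_trans hx h⟩

lemma V_nonprincipal (S : Set ℕ) (h : Sᶜ.Finite) : S ∈ c.V := by
  refine (c.mem_V_iff S).2 ⟨∅, ?_⟩
  exact h.subset (fun a ha => ha.2)

lemma empty_not_mem_V : ∅ ∉ c.V := by
  rintro ⟨x, hx⟩
  exact c.not_asub_T_empty x hx

lemma V_decide (S : Set ℕ) : S ∈ c.V ↔ c.T S ⊆ S := by
  constructor
  · intro hS
    rcases c.T_dec S with h | h
    · exact h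
    · exfalso
      obtain ⟨x, hx⟩ := (c.mem_V_iff S).1 hS
      obtain ⟨z, hzx, hzS⟩ := c.T_comparable x S
      have h1 : asub (c.T z) S := asub_trans hzx hx
      have h2 : asub (c.T z) Sᶜ := asub_trans_subset hzS h
      refine c.T_inf z ((h1.union h2).subset ?_)
      intro a ha
      by_cases haS : a ∈ S
      · exact Or.inr ⟨ha, fun hb => hb haS⟩
      · exact Or.inl ⟨ha, haS⟩
  · intro h
    exact (c.mem_V_iff S).2 ⟨S, asub_of_subset h⟩

/-! The product ultrafilter `W` on `ℕ`, via a pairing bijection. -/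

end Ctx

/-- pairing equivalence -/
noncomputable def pe : ℕ × ℕ ≃ ℕ := Denumerable.eqv (ℕ × ℕ)

/-- columns of a subset of `ℕ`, viewed as a planar set via `pe` -/
def cls (s : Set ℕ) (m : ℕ) : Set ℕ := {n | pe (m, n) ∈ s}

lemma cls_compl (s : Set ℕ) (m : ℕ) : cls sᶜ m = (cls s m)ᶜ := rfl

lemma pe_col_injective (m : ℕ) : Function.Injective (fun n => pe (m, n)) := by
  intro n1 n2 h12
  have := pe.injective h12
  exact (Prod.mk.injEq .. ▸ this).2

lemma cls_finite {s : Set ℕ} (h : s.Finite) (m : ℕ) : (cls s m).Finite := by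
  have : cls s m = (fun n => pe (m, n)) ⁻¹' s := rfl
  rw [this]
  exact Set.Finite.preimage (Set.injOn_of_injective (pe_col_injective m)) h

lemma cls_diff_finite {s t : Set ℕ} (h : (t \ s).Finite) (m : ℕ) :
    (cls t m \ cls s m).Finite := by
  have : cls t m \ cls s m = (fun n => pe (m, n)) ⁻¹' (t \ s) := rfl
  rw [this]
  exact Set.Finite.preimage (Set.injOn_of_injective (pe_col_injective m)) h

namespace Ctx

open scoped Classical

variable (c : Ctx)

/-- the `U`-limit set of columns -/
def Ms (s : Set ℕ) : Set ℕ := {m | cls s m ∈ c.V}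

def Wfil : Filter ℕ where
  sets := {s | c.Ms s ∈ c.U}
  univ_sets := by
    have : c.Ms Set.univ = Set.univ := by
      ext m
      simp only [Ms, cls, Set.mem_setOf_eq, Set.mem_univ, iff_true]
      exact Filter.univ_mem
    simp only [Set.mem_setOf_eq, this]
    exact Filter.univ_mem
  sets_of_superset := by
    intro s s' hs hss'
    refine c.U.toFilter.mem_of_superset hs ?_
    intro m hm
    have hm' : cls s m ∈ c.V := hm
    exact Ultrafilter.mem_coe.1
      (Filter.mem_of_superset (Ultrafilter.mem_coe.2 hm')
        (fun n hn => show pe (m, n) ∈ s' from hss' hn))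
  inter_sets := by
    intro s s' hs hs'
    have h2 : c.Ms s ∩ c.Ms s' ⊆ c.Ms (s ∩ s') := by
      intro m hm
      have hm1 : cls s m ∈ c.V := hm.1
      have hm2 : cls s' m ∈ c.V := hm.2
      show cls (s ∩ s') m ∈ c.V
      exact Ultrafilter.mem_coe.1
        (Filter.inter_mem (Ultrafilter.mem_coe.2 hm1) (Ultrafilter.mem_coe.2 hm2))
    exact c.U.toFilter.mem_of_superset (Filter.inter_mem hs hs') h2

noncomputable def W : Ultrafilter ℕ := by
  refine Ultrafilter.ofComplNotMemIff c.Wfil ?_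
  intro s
  have hMc : c.Ms sᶜ = (c.Ms s)ᶜ := by
    ext m
    simp only [Ms, Set.mem_setOf_eq, Set.mem_compl_iff, cls_compl]
    exact Ultrafilter.compl_mem_iff_notMem
  show ¬ (c.Ms sᶜ ∈ c.U) ↔ c.Ms s ∈ c.U
  rw [hMc]
  constructor
  · intro h
    rcases Ultrafilter.mem_or_compl_mem c.U (c.Ms s) with h1 | h1
    · exact h1
    · exact absurd h1 h
  · intro h hc
    exact Ultrafilter.empty_notMem (f := c.U) (by
      have := Filter.inter_mem (Ultrafilter.mem_coe.2 h) (Ultrafilter.mem_coe.2 hc)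
      rwa [Set.inter_compl_self] at this)

lemma mem_W_iff (s : Set ℕ) : s ∈ c.W ↔ c.Ms s ∈ c.U := Iff.rfl

lemma W_nonprincipal (s : Set ℕ) (h : sᶜ.Finite) : s ∈ c.W := by
  rw [c.mem_W_iff]
  have : c.Ms s = Set.univ := by
    ext m
    simp only [Ms, Set.mem_setOf_eq, Set.mem_univ, iff_true]
    refine c.V_nonprincipal _ ?_
    rw [← cls_compl]
    exact cls_finite h m
  rw [this]
  exact Filter.univ_mem

lemma Ms_mono {s t : Set ℕ} (h : (t \ s).Finite) : c.Ms t ⊆ c.Ms s := by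
  intro m hm
  exact c.V_asub hm (cls_diff_finite h m)

/-! The transversal family and the rank function. -/

lemma exists_hfun (x : Set ℕ) :
    ∃ h : Set ℕ, h ∈ c.U ∧ ∀ A, A ∈ c.U → c.lt A x → ¬ A ⊆ h := by
  have hAcnt : {A | A ∈ c.U ∧ c.lt A x}.Countable :=
    (c.hcnt x).mono (fun A hA => hA.2)
  obtain ⟨Ta, Tb, hdisj, htrans⟩ := exists_two_transversals _ hAcnt
    (fun A hA => c.mem_U_infinite hA.1)
  by_cases hTa : Taᶜ ∈ c.U
  · refine ⟨Taᶜ, hTa, ?_⟩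
    intro A hA hAx hsub
    obtain ⟨a, haA, haTa⟩ := (htrans A ⟨hA, hAx⟩).1
    exact (hsub haA) haTa
  · have hTaU : Ta ∈ c.U := by
      rcases Ultrafilter.mem_or_compl_mem c.U Ta with h | h
      · exact h
      · exact absurd h hTa
    have hTb : Tbᶜ ∈ c.U := by
      rcases Ultrafilter.mem_or_compl_mem c.U Tb with h | h
      · exfalso
        have := Filter.inter_mem (Ultrafilter.mem_coe.2 hTaU) (Ultrafilter.mem_coe.2 h)
        rw [Set.disjoint_iff_inter_eq_empty.1 hdisj] at this
        exact Ultrafilter.empty_notMem (f := c.U) this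
      · exact h
    refine ⟨Tbᶜ, hTb, ?_⟩
    intro A hA hAx hsub
    obtain ⟨a, haA, haTb⟩ := (htrans A ⟨hA, hAx⟩).2
    exact (hsub haA) haTb

noncomputable def hfun (x : Set ℕ) : Set ℕ := (c.exists_hfun x).choose

lemma hfun_mem (x : Set ℕ) : c.hfun x ∈ c.U := (c.exists_hfun x).choose_spec.1

lemma hfun_prop (x : Set ℕ) {A : Set ℕ} (hA : A ∈ c.U) (hAx : c.lt A x) :
    ¬ A ⊆ c.hfun x := (c.exists_hfun x).choose_spec.2 A hA hAx

/-- the set whose minimum is the rank of `A` -/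
def rnkSet (A : Set ℕ) : Set (Set ℕ) := {z | ∀ y, A ⊆ c.hfun y → c.lt y z}

lemma rnkSet_nonempty {A : Set ℕ} (hA : A ∈ c.U) : (c.rnkSet A).Nonempty := by
  have hsub : {y | A ⊆ c.hfun y} ⊆ {y | c.lt y A} ∪ {A} := by
    intro y hy
    rcases c.htri y A with h | h | h
    · exact Or.inl h
    · exact Or.inr (by simp [h])
    · exact absurd hy (c.hfun_prop y hA h)
  have hcntb : {y | A ⊆ c.hfun y}.Countable :=
    ((c.hcnt A).union (Set.countable_singleton A)).mono hsub
  obtain ⟨z, _, hz⟩ := c.hbddS Set.univ _ uncountable_setNat hcntb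
  exact ⟨z, fun y hy => hz y hy⟩

noncomputable def rnk (A : Set ℕ) : Set ℕ :=
  if h : (c.rnkSet A).Nonempty then c.hwf.min _ h else ∅

lemma rnk_eq {A : Set ℕ} (hA : A ∈ c.U) :
    c.rnk A = c.hwf.min _ (c.rnkSet_nonempty hA) := dif_pos _

lemma rnk_spec {A : Set ℕ} (hA : A ∈ c.U) {y : Set ℕ} (hy : A ⊆ c.hfun y) :
    c.lt y (c.rnk A) := by
  rw [c.rnk_eq hA]
  exact c.hwf.min_mem _ (c.rnkSet_nonempty hA) y hy

lemma rnk_mono {A A' : Set ℕ} (hA : A ∈ c.U) (hA' : A' ∈ c.U) (h : A' ⊆ A) :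
    c.rnk A = c.rnk A' ∨ c.lt (c.rnk A) (c.rnk A') := by
  have hsub : c.rnkSet A' ⊆ c.rnkSet A := by
    intro z hz y hy
    exact hz y (Set.Subset.trans h hy)
  have hmem : c.rnk A' ∈ c.rnkSet A := by
    rw [c.rnk_eq hA']
    exact hsub (c.hwf.min_mem _ (c.rnkSet_nonempty hA'))
  have hnlt : ¬ c.lt (c.rnk A') (c.rnk A) := by
    rw [c.rnk_eq hA]
    exact c.hwf.not_lt_min _ hmem
  rcases c.htri (c.rnk A) (c.rnk A') with h1 | h1 | h1
  · exact Or.inr h1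
  · exact Or.inl h1
  · exact absurd h1 hnlt

lemma T_rnk_asub {A A' : Set ℕ} (hA : A ∈ c.U) (hA' : A' ∈ c.U) (h : A' ⊆ A) :
    asub (c.T (c.rnk A')) (c.T (c.rnk A)) := by
  rcases c.rnk_mono hA hA' h with h1 | h1
  · rw [h1]; exact asub_refl _
  · exact c.T_chain h1


/-! The map `φ` and its properties. -/

noncomputable def phiSet (A : Set ℕ) : Set ℕ :=
  pe '' {p : ℕ × ℕ | p.1 ∈ A ∧ p.2 ∈ c.T (c.rnk A) ∧ nxt A p.1 ≤ p.2}

lemma mem_phiSet (A : Set ℕ) (m n : ℕ) :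
    pe (m, n) ∈ c.phiSet A ↔ (m ∈ A ∧ n ∈ c.T (c.rnk A) ∧ nxt A m ≤ n) := by
  constructor
  · rintro ⟨p, hp, hpe⟩
    have := pe.injective hpe
    rw [this] at hp
    exact hp
  · intro h
    exact ⟨(m, n), h, rfl⟩

lemma pairs_finite {D : Set ℕ} (hD : D.Finite) :
    (pe '' {p : ℕ × ℕ | p.2 ∈ D ∧ p.1 < p.2}).Finite := by
  refine Set.Finite.image pe ?_
  refine Set.Finite.subset (Set.Finite.biUnion hD
    (fun n _ => (Set.finite_Iio n).prod (Set.finite_singleton n))) ?_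
  rintro ⟨m, n⟩ ⟨h1, h2⟩
  exact Set.mem_biUnion h1 ⟨h2, rfl⟩

lemma phiSet_mem_W {A : Set ℕ} (hA : A ∈ c.U) : c.phiSet A ∈ c.W := by
  rw [c.mem_W_iff]
  have hM : c.Ms (c.phiSet A) = A := by
    ext m
    show cls (c.phiSet A) m ∈ c.V ↔ m ∈ A
    have hcl : cls (c.phiSet A) m = {n | m ∈ A ∧ n ∈ c.T (c.rnk A) ∧ nxt A m ≤ n} := by
      ext n
      show pe (m, n) ∈ c.phiSet A ↔ _
      rw [c.mem_phiSet A m n]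
      rfl
    rw [hcl]
    constructor
    · intro hV
      by_contra hmA
      have : {n | m ∈ A ∧ n ∈ c.T (c.rnk A) ∧ nxt A m ≤ n} = ∅ := by
        ext n
        simp [hmA]
      rw [this] at hV
      exact c.empty_not_mem_V hV
    · intro hmA
      refine c.V_asub ((c.mem_V_iff _).2 ⟨c.rnk A, asub_refl _⟩) ?_
      have : c.T (c.rnk A) \ {n | m ∈ A ∧ n ∈ c.T (c.rnk A) ∧ nxt A m ≤ n} ⊆
          Set.Iio (nxt A m) := by
        intro n hn
        by_contra hc
        exact hn.2 ⟨hmA, hn.1, le_of_not_gt hc⟩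
      exact (Set.finite_Iio _).subset this
  rw [hM]
  exact hA

lemma phiSet_mono {A A' : Set ℕ} (hA : A ∈ c.U) (hA' : A' ∈ c.U) (h : A' ⊆ A) :
    (c.phiSet A' \ c.phiSet A).Finite := by
  have hD : (c.T (c.rnk A') \ c.T (c.rnk A)).Finite := c.T_rnk_asub hA hA' h
  refine (pairs_finite hD).subset ?_
  intro k hk
  obtain ⟨p, hp, rfl⟩ := hk.1
  obtain ⟨hp1, hp2, hp3⟩ := hp
  have hinfA' : A'.Infinite := c.mem_U_infinite hA'
  have hnxt : nxt A p.1 ≤ p.2 := le_trans (nxt_mono h hinfA' p.1) hp3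
  have hp2' : p.2 ∉ c.T (c.rnk A) := by
    intro hc
    exact hk.2 (⟨p, ⟨h hp1, hc, hnxt⟩, rfl⟩)
  refine ⟨p, ⟨⟨hp2, hp2'⟩, ?_⟩, rfl⟩
  have := (nxt_spec hinfA' p.1).2
  omega

/-- The key cofinality property of `φ`. -/
lemma phi_cofinal {s : Set ℕ} (hs : s ∈ c.W) :
    ∃ A, A ∈ c.U ∧ (c.phiSet A \ s).Finite := by
  set Xs : Set (ℕ × ℕ) := {p : ℕ × ℕ | pe p ∈ s} with hXs
  have hcolX : ∀ m, col Xs m = cls s m := fun m => rfl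
  -- find the stage handling `s`
  obtain ⟨x, hx1, hx2⟩ := c.hbddS {x | c.g x = Xs} (Set.range fun m => cls s m)
    (c.hg Xs) (Set.countable_range _)
  have hgx : c.g x = Xs := hx1
  have hcols : ∀ m, c.lt (col (c.g x) m) x := by
    intro m
    rw [hgx, hcolX m]
    exact hx2 _ ⟨m, rfl⟩
  have hPeq : c.Pset x c.T = c.Ms s := by
    ext m
    show c.T (col (c.g x) m) ⊆ col (c.g x) m ↔ cls s m ∈ c.V
    rw [hgx, hcolX m]
    exact (c.V_decide _).symm
  have hTH : c.TaskHyp x c.T := by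
    refine ⟨hcols, ?_⟩
    rw [hPeq]
    exact (c.mem_W_iff s).1 hs
  obtain ⟨A0, hA0U, hA0P, hA0prop⟩ := c.T_task x hTH
  set A : Set ℕ := A0 ∩ c.hfun x with hA
  have hAU : A ∈ c.U := Filter.inter_mem hA0U (c.hfun_mem x)
  have hAinf : A.Infinite := c.mem_U_infinite hAU
  have hltx : c.lt x (c.rnk A) := c.rnk_spec hAU Set.inter_subset_right
  have hD : (c.T (c.rnk A) \ c.T x).Finite := c.T_chain hltx
  refine ⟨A, hAU, (pairs_finite hD).subset ?_⟩
  intro k hk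
  obtain ⟨p, hp, rfl⟩ := hk.1
  obtain ⟨hp1, hp2, hp3⟩ := hp
  have hns : pe p ∉ s := hk.2
  have hp2' : p.2 ∉ c.T x := by
    intro hc
    have hm0 : p.1 ∈ A0 := hp1.1
    have hnxt0 : nxt A0 p.1 ≤ p.2 :=
      le_trans (nxt_mono Set.inter_subset_left hAinf p.1) hp3
    have := hA0prop p.1 hm0 p.2 hc hnxt0
    rw [hgx, hcolX p.1] at this
    exact hns this
  refine ⟨p, ⟨⟨hp2, hp2'⟩, ?_⟩, rfl⟩
  have := (nxt_spec hAinf p.1).2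
  omega

/-! Properties of the projection `ψ`. -/

lemma psi_cofinal {A : Set ℕ} (hA : A ∈ c.U) :
    ∃ s, s ∈ c.W ∧ c.Ms s ⊆ A := by
  set s : Set ℕ := pe '' {p : ℕ × ℕ | p.1 ∈ A} with hsdef
  have hcl : ∀ m, cls s m = if m ∈ A then Set.univ else ∅ := by
    intro m
    ext n
    show pe (m, n) ∈ s ↔ _
    constructor
    · rintro ⟨p, hp, hpe⟩
      have := pe.injective hpe
      rw [this] at hp
      by_cases hmA : m ∈ A
      · simp [hmA]
      · exact absurd hp hmA
    · intro hn
      by_cases hmA : m ∈ A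
      · exact ⟨(m, n), hmA, rfl⟩
      · simp [hmA] at hn
  have hM : c.Ms s = A := by
    ext m
    show cls s m ∈ c.V ↔ m ∈ A
    rw [hcl m]
    by_cases hmA : m ∈ A
    · simp only [hmA, if_true, iff_true]
      exact c.V_nonprincipal _ (by simp)
    · simp only [hmA, if_false, iff_false]
      exact c.empty_not_mem_V
  refine ⟨s, ?_, by rw [hM]⟩
  rw [c.mem_W_iff, hM]
  exact hA

/-! Final assembly: the cofinal equivalence. -/

lemma main_cofequiv (c : Ctx) : CofEquiv (UOrd c.U) (UOrdStar c.W) := by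
  classical
  refine ⟨UOrd c.U × UOrdStar c.W,
    (fun r1 r2 => r1.1 ≤ r2.1 ∧ r1.2 ≤ r2.2), ?_, ?_, ?_⟩
  · intro r; exact ⟨le_refl _, le_refl _⟩
  · intro r1 r2 r3 h12 h23; exact ⟨le_trans h12.1 h23.1, le_trans h12.2 h23.2⟩
  · refine ⟨(fun p => (p, ⟨c.phiSet p.1, c.phiSet_mem_W p.2⟩)),
      (fun q => (⟨c.Ms q.1, (c.mem_W_iff q.1).1 q.2⟩, q)), ?_, ?_, ?_, ?_, ?_, ?_⟩
    · intro a b hab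
      exact congrArg Prod.fst hab
    · intro a b hab
      exact congrArg Prod.snd hab
    · intro a b
      constructor
      · intro hab
        refine ⟨hab, ?_⟩
        show (c.phiSet b.1 \ c.phiSet a.1).Finite
        exact c.phiSet_mono a.2 b.2 hab
      · intro h
        exact h.1
    · intro a b
      constructor
      · intro hab
        refine ⟨?_, hab⟩
        show c.Ms b.1 ⊆ c.Ms a.1
        exact c.Ms_mono hab
      · intro h
        exact h.2
    · rintro ⟨p, q⟩
      obtain ⟨A, hAU, hAfin⟩ := c.phi_cofinal q.2
      have hmem : p.1 ∩ A ∈ c.U := Filter.inter_mem p.2 hAU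
      refine ⟨⟨p.1 ∩ A, hmem⟩, ?_, ?_⟩
      · show p.1 ∩ A ⊆ p.1
        exact Set.inter_subset_left
      · show (c.phiSet (p.1 ∩ A) \ q.1).Finite
        exact asub_trans (c.phiSet_mono hAU hmem Set.inter_subset_right) hAfin
    · rintro ⟨p, q⟩
      obtain ⟨s, hsW, hsMs⟩ := c.psi_cofinal p.2
      have hmem : q.1 ∩ s ∈ c.W :=
        Ultrafilter.mem_coe.1
          (Filter.inter_mem (Ultrafilter.mem_coe.2 q.2) (Ultrafilter.mem_coe.2 hsW))
      refine ⟨⟨q.1 ∩ s, hmem⟩, ?_, ?_⟩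
      · show c.Ms (q.1 ∩ s) ⊆ p.1
        refine Set.Subset.trans ?_ hsMs
        refine c.Ms_mono ?_
        rw [Set.diff_eq_empty.2 Set.inter_subset_right]
        exact Set.finite_empty
      · show ((q.1 ∩ s) \ q.1).Finite
        rw [Set.diff_eq_empty.2 Set.inter_subset_left]
        exact Set.finite_empty

end Ctx

end Chbeta

/-- CH: for every nonprincipal ultrafilter `U` on `ω` there is a
nonprincipal ultrafilter `W` on `ω` such that `(U, ⊇)` is cofinally equivalent to
`(W, ⊇*)`; i.e. under CH every nonprincipal neighborhood filter of `βω` is cofinally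
equivalent to a neighborhood filter of `βω ∖ ω`. -/
theorem ch_betaomega_filter_cofinally_equiv_remainder_filter
    (hCH : (2 : Cardinal) ^ Cardinal.aleph0 = Cardinal.aleph 1)
    (U : Ultrafilter ℕ) (hU : ∀ s : Set ℕ, sᶜ.Finite → s ∈ U) :
    ∃ W : Ultrafilter ℕ, (∀ s : Set ℕ, sᶜ.Finite → s ∈ W) ∧
      CofEquiv (UOrd U) (UOrdStar W) := by
  have hCH0 : (2 : Cardinal.{0}) ^ Cardinal.aleph0 = Cardinal.aleph 1 := by
    apply Cardinal.lift_injective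
    rw [Cardinal.lift_power, Cardinal.lift_aleph0, Cardinal.lift_aleph, Cardinal.lift_ofNat]
    simpa using hCH
  obtain ⟨c, hc⟩ := Chbeta.exists_ctx hCH0 U hU
  subst hc
  exact ⟨c.W, fun s hs => c.W_nonprincipal s hs, Chbeta.Ctx.main_cofequiv c⟩
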